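/- Let Λ₀ and Λ₁ be real d×d matrices with Λ₁ invertible, and suppose that for every integer vector z ∈ ℤ^d one has ‖Λ₀ z‖ ≤ ‖Λ₁ z‖ in the Euclidean norm. Then the matrix Λ₁ᵀ·Λ₁ − Λ₀ᵀ·Λ₀ is positive semidefinite. -/

import Mathlib

open scoped Matrix

/-- The Euclidean norm of a vector in `ℝ^d`. -/
noncomputable def euclNorm {d : ℕ} (v : Fin d → ℝ) : ℝ :=
  ‖(EuclideanSpace.equiv (Fin d) ℝ).symm v‖

lemma euclNorm_sq {d : ℕ} (v : Fin d → ℝ) : euclNorm v ^ 2 = v ⬝ᵥ v := by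
  rw [euclNorm, EuclideanSpace.norm_eq, Real.sq_sqrt (by positivity)]
  simp [dotProduct, sq]

/-- If `Λ₁` is invertible and `‖Λ₀ z‖ ≤ ‖Λ₁ z‖` for every integer vector
`z ∈ ℤ^d`, then `Λ₁ᵀ·Λ₁ − Λ₀ᵀ·Λ₀` is positive semidefinite. -/
theorem stmt_8 (d : ℕ) (Λ₀ Λ₁ : Matrix (Fin d) (Fin d) ℝ) (h₁ : IsUnit Λ₁.det)
    (h : ∀ z : Fin d → ℤ,
      euclNorm (Λ₀.mulVec fun i => (z i : ℝ)) ≤ euclNorm (Λ₁.mulVec fun i => (z i : ℝ))) :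
    (Λ₁ᵀ * Λ₁ - Λ₀ᵀ * Λ₀).PosSemidef := by
  have hherm : (Λ₁ᵀ * Λ₁ - Λ₀ᵀ * Λ₀).IsHermitian := by
    have h1 := Matrix.isHermitian_conjTranspose_mul_self Λ₁
    have h0 := Matrix.isHermitian_conjTranspose_mul_self Λ₀
    simp only [Matrix.conjTranspose_eq_transpose_of_trivial] at h1 h0 ⊢
    exact h1.sub h0
  -- the quadratic form
  set f : (Fin d → ℝ) → ℝ :=
    fun x => Λ₁.mulVec x ⬝ᵥ Λ₁.mulVec x - Λ₀.mulVec x ⬝ᵥ Λ₀.mulVec x with hf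
  have hfcont : Continuous f := by
    apply Continuous.sub <;>
      exact ((continuous_const.matrix_mulVec continuous_id).dotProduct
        (continuous_const.matrix_mulVec continuous_id))
  have hfz : ∀ z : Fin d → ℤ, 0 ≤ f (fun i => (z i : ℝ)) := fun z => by
    have h2 := h z
    have e0 := euclNorm_sq (Λ₀.mulVec fun i => (z i : ℝ))
    have e1 := euclNorm_sq (Λ₁.mulVec fun i => (z i : ℝ))
    have hnn : 0 ≤ euclNorm (Λ₀.mulVec fun i => (z i : ℝ)) := norm_nonneg _
    have h3 := pow_le_pow_left₀ hnn h2 2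
    simp only [hf]
    rw [← e0, ← e1]
    linarith
  have hsmul : ∀ (c : ℝ) (v : Fin d → ℝ), f (c • v) = c ^ 2 * f v := fun c v => by
    simp [hf, Matrix.mulVec_smul, dotProduct_smul, smul_dotProduct,
      smul_eq_mul, sq]
    ring
  have hfx : ∀ x : Fin d → ℝ, 0 ≤ f x := by
    intro x
    set s : ℕ → (Fin d → ℝ) :=
      fun n => ((n : ℝ)⁻¹) • fun i => ((round ((n : ℝ) * x i) : ℤ) : ℝ) with hs
    have hnonneg : ∀ n, 0 ≤ f (s n) := fun n => by
      rw [hs, hsmul]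
      exact mul_nonneg (by positivity) (hfz _)
    have htend : Filter.Tendsto s Filter.atTop (nhds x) := by
      rw [tendsto_pi_nhds]
      intro i
      have : Filter.Tendsto (fun n : ℕ => s n i - x i) Filter.atTop (nhds 0) := by
        apply squeeze_zero_norm' (a := fun n : ℕ => (n : ℝ)⁻¹) ?_ ?_
        · filter_upwards [Filter.eventually_ge_atTop 1] with n hn
          have hn' : (0 : ℝ) < n := by exact_mod_cast hn
          have : |((round ((n : ℝ) * x i) : ℤ) : ℝ) - (n : ℝ) * x i| ≤ 1 / 2 :=
            by rw [abs_sub_comm]; exact abs_sub_round _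
          have hs' : s n i - x i = (((round ((n : ℝ) * x i) : ℤ) : ℝ) - (n : ℝ) * x i) / n := by
            simp [hs]
            field_simp
          rw [hs', Real.norm_eq_abs, abs_div, abs_of_pos hn']
          calc |((round ((n : ℝ) * x i) : ℤ) : ℝ) - (n : ℝ) * x i| / n ≤ (1/2) / n := by
                exact div_le_div_of_nonneg_right this hn'.le
            _ ≤ (n:ℝ)⁻¹ := by rw [div_le_iff₀ hn']; field_simp; norm_num
        · exact tendsto_inv_atTop_zero.comp tendsto_natCast_atTop_atTop
      have := this.add_const (x i)
      simpa using this
    have := (hfcont.continuousAt (x := x)).tendsto.comp htend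
    exact ge_of_tendsto this (Filter.Eventually.of_forall hnonneg)
  refine Matrix.PosSemidef.of_dotProduct_mulVec_nonneg hherm fun x => ?_
  have key : x ⬝ᵥ (Λ₁ᵀ * Λ₁ - Λ₀ᵀ * Λ₀).mulVec x = f x := by
    simp only [Matrix.sub_mulVec, dotProduct_sub, ← Matrix.mulVec_mulVec, hf]
    rw [Matrix.dotProduct_mulVec x Λ₁ᵀ, Matrix.dotProduct_mulVec x Λ₀ᵀ,
      Matrix.vecMul_transpose, Matrix.vecMul_transpose]
  simpa [key] using hfx x
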